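/- Let the first-order gauge-transformed rigging perturbations be δl' = δλ·(l + Z) + λ·(δl + δZ + δh(v,·)) and δl2' = 2λδλ·(l2 + 2W + Z(v)) + λ²·(δl2 + 2δW + 2δZ(v) + 2δl(v) + δh(v,v)), where v = W·n + P(Z,·)♯, and suppose background gauge fields agree on both sides: [λ] = [W] = [Z] = 0 (λ ≠ 0), as do the background data and the unprimed perturbations: [h] = [l] = [l2] = 0, [δh] = [δl] = [δl2] = 0. Then [δl'] = 0 and [δl2'] = 0 if and only if [δλ] = 0, [δW] = 0 and [δZ] = 0, where the first-order gauge fields satisfy n2·δW± + δZ±(n) = 0. -/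
import Mathlib


/-- Rigging independence of the matching conditions to first order (Prop. 6.5, pointwise):
with shared background data, background gauge fields and unprimed perturbations, the gauge
transformed first-order rigging perturbations from the two sides agree iff the first-order
gauge fields agree. -/
theorem stmt_10
    (V : Type*) [AddCommGroup V] [Module ℝ V] [FiniteDimensional ℝ V]
    (h : V →ₗ[ℝ] V →ₗ[ℝ] ℝ) (hsymm : ∀ X Y : V, h X Y = h Y X)
    (l : Module.Dual ℝ V) (l2 : ℝ)
    (P : Module.Dual ℝ V →ₗ[ℝ] Module.Dual ℝ V →ₗ[ℝ] ℝ)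
    (Psymm : ∀ ω χ : Module.Dual ℝ V, P ω χ = P χ ω)
    (n : V) (n2 : ℝ)
    (c1 : ∀ (ω : Module.Dual ℝ V) (X : V), P ω (h X) + ω n * l X = ω X)
    (c2 : ∀ ω : Module.Dual ℝ V, P ω l + l2 * ω n = 0)
    (c3 : l n + n2 * l2 = 1)
    (c4 : ∀ X : V, h n X + n2 * l X = 0)
    -- shared background gauge fields (the jumps [λ], [W], [Z] vanish):
    (lam : ℝ) (hlam : lam ≠ 0) (W : ℝ) (Z : Module.Dual ℝ V)
    (hc : n2 * W + Z n = 0)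
    (v : V) (hv : ∀ ω : Module.Dual ℝ V, ω v = W * ω n + P Z ω)
    -- shared (unjumped) first-order perturbations of the data:
    (δh : V →ₗ[ℝ] V →ₗ[ℝ] ℝ) (δhsymm : ∀ X Y : V, δh X Y = δh Y X)
    (δl : Module.Dual ℝ V) (δl2 : ℝ)
    -- first-order gauge fields on the two sides:
    (dlamp dlamm dWp dWm : ℝ) (dZp dZm : Module.Dual ℝ V)
    (hcp : n2 * dWp + dZp n = 0) (hcm : n2 * dWm + dZm n = 0) :
    ((dlamp • (l + Z) + lam • (δl + dZp + δh v)
        = dlamm • (l + Z) + lam • (δl + dZm + δh v)) ∧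
      (2 * lam * dlamp * (l2 + 2 * W + Z v)
          + lam ^ 2 * (δl2 + 2 * dWp + 2 * dZp v + 2 * δl v + δh v v)
        = 2 * lam * dlamm * (l2 + 2 * W + Z v)
          + lam ^ 2 * (δl2 + 2 * dWm + 2 * dZm v + 2 * δl v + δh v v)))
    ↔ (dlamp = dlamm ∧ dWp = dWm ∧ dZp = dZm) := by
  constructor
  · rintro ⟨e1, e2⟩
    -- l v = W
    have hPZl := c2 Z
    have hlv : l v = W := by
      have h1 := hv l
      linear_combination h1 + hPZl + W * c3 - l2 * hc
    -- evaluate e1 at n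
    have e1n := congrArg (fun f : Module.Dual ℝ V => f n) e1
    have e1v := congrArg (fun f : Module.Dual ℝ V => f v) e1
    simp only [LinearMap.add_apply, LinearMap.smul_apply, smul_eq_mul] at e1n e1v
    -- scalar derived equations
    have En : (dlamp - dlamm) * (l n + Z n) + lam * (dZp n - dZm n) = 0 := by ring_nf; ring_nf at e1n; linarith
    have Ev : (dlamp - dlamm) * (l v + Z v) + lam * (dZp v - dZm v) = 0 := by ring_nf; ring_nf at e1v; linarith
    have E2 : 2 * lam * (dlamp - dlamm) * (l2 + 2 * W + Z v)
        + lam ^ 2 * (2 * (dWp - dWm) + 2 * (dZp v - dZm v)) = 0 := by linarith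
    -- from Ev: lam * (dZp v - dZm v) = -(dlamp - dlamm) * (W + Z v)
    have EvW : lam * (dZp v - dZm v) = -((dlamp - dlamm) * (W + Z v)) := by
      rw [hlv] at Ev; linarith
    have key : (dlamp - dlamm) * (l2 + W) + lam * (dWp - dWm) = 0 := by
      have h2l : (2 : ℝ) * lam ≠ 0 := mul_ne_zero two_ne_zero hlam
      have hme : 2 * lam * ((dlamp - dlamm) * (l2 + W) + lam * (dWp - dWm)) = 0 := by
        linear_combination E2 - 2 * lam * EvW
      exact (mul_eq_zero.mp hme).resolve_left h2l
    have ha : dlamp - dlamm = 0 := by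
      -- En with c3, hc, hcp, hcm
      have hZn : Z n = -(n2 * W) := by linarith
      have hln : l n = 1 - n2 * l2 := by linarith
      have hdZn : dZp n - dZm n = -(n2 * (dWp - dWm)) := by linarith
      rw [hZn, hln, hdZn] at En
      linear_combination En + n2 * key
    have hd : dWp - dWm = 0 := by
      rw [ha, zero_mul, zero_add] at key
      exact (mul_eq_zero.mp key).resolve_left hlam
    have hdlam : dlamp = dlamm := by linarith
    have hdW : dWp = dWm := by linarith
    refine ⟨hdlam, hdW, ?_⟩
    ext X
    have e1X := congrArg (fun f : Module.Dual ℝ V => f X) e1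
    simp only [LinearMap.add_apply, LinearMap.smul_apply, smul_eq_mul] at e1X
    rw [hdlam] at e1X
    have : lam * dZp X = lam * dZm X := by linarith
    exact mul_left_cancel₀ hlam this
  · rintro ⟨h1, h2, h3⟩
    subst h1; subst h2; subst h3
    exact ⟨rfl, rfl⟩
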